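/- For $n \geq 4$, the distance spectrum of the non-commuting graph of the quasidihedral group $QD_{2^n}$, i.e. of $K_{2^{n-1}-2,2,\ldots,2}$ with $2^{n-2}$ parts of size 2, consists of $-2$ with multiplicity $3\cdot 2^{n-2}-3$, $0$ with multiplicity $2^{n-2}-1$, and the two simple eigenvalues $3(2^{n-2}-1) \pm \sqrt{5\cdot(2^{n-2})^2 - 10\cdot 2^{n-2} + 9}$. -/

import Mathlib

open Polynomial Matrix

/-- The distance matrix of a graph, with real entries. -/
noncomputable def distMatrix {V : Type*} [Fintype V] (G : SimpleGraph V) : Matrix V V ℝ :=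
  Matrix.of fun u v => (G.dist u v : ℝ)

lemma evalcp {n : Type*} [Fintype n] [DecidableEq n] (M : Matrix n n ℝ) (t : ℝ) :
    M.charpoly.eval t = (t • (1 : Matrix n n ℝ) - M).det := by
  rw [Matrix.charpoly, ← Polynomial.coe_evalRingHom, RingHom.map_det]
  congr 1
  ext i j
  by_cases h : i = j
  · subst h; simp [Matrix.charmatrix_apply_eq, Matrix.one_apply]
  · simp [Matrix.charmatrix_apply_ne _ _ _ h, Matrix.one_apply_ne h]

lemma det_diag_sub_rankone {K : Type*} [Fintype K] [DecidableEq K] (d s : K → ℝ)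
    (hd : ∀ i, d i ≠ 0) :
    (Matrix.of fun i j => (if i = j then d i else 0) - s i).det
      = (∏ i, d i) * (1 - ∑ i, s i / d i) := by
  set u : Matrix K Unit ℝ := Matrix.of fun i _ => -s i / d i with hu
  set r : Matrix Unit K ℝ := Matrix.of fun _ _ => (1 : ℝ) with hr
  have key : (Matrix.of fun i j => (if i = j then d i else 0) - s i)
      = Matrix.diagonal d * (1 + u * r) := by
    ext i j
    rw [Matrix.diagonal_mul]
    simp only [Matrix.add_apply, Matrix.mul_apply, Matrix.one_apply, Matrix.of_apply,
      Finset.univ_unique, Finset.sum_singleton, hu, hr]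
    by_cases h : i = j
    · subst h
      rw [if_pos rfl, if_pos rfl]
      field_simp [hd i]
      ring
    · rw [if_neg h, if_neg h]
      field_simp [hd i]
      ring
  rw [key, Matrix.det_mul, Matrix.det_diagonal, Matrix.det_one_add_mul_comm]
  congr 1
  rw [Matrix.det_unique]
  simp only [Matrix.add_apply, Matrix.one_apply_eq, Matrix.mul_apply, hu, hr, Matrix.of_apply]
  rw [sub_eq_add_neg, ← Finset.sum_neg_distrib]
  congr 1
  exact Finset.sum_congr rfl fun i _ => by rw [one_mul, neg_div]

lemma dist_cmg' {K : Type*} [DecidableEq K] (sz : K → ℕ) (hsz : ∀ i, 0 < sz i)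
    (hcard : ∀ i : K, ∃ j : K, j ≠ i)
    (u v : (i : K) × Fin (sz i)) :
    (SimpleGraph.completeMultipartiteGraph fun i => Fin (sz i)).dist u v
      = if u = v then 0 else if u.1 = v.1 then 2 else 1 := by
  set G := SimpleGraph.completeMultipartiteGraph fun i => Fin (sz i) with hG
  have hadj : ∀ a b : (i : K) × Fin (sz i), G.Adj a b ↔ a.1 ≠ b.1 := by
    intro a b; simp [hG]
  by_cases h : u = v
  · simp [h]
  · rw [if_neg h]
    by_cases h2 : u.1 = v.1
    · rw [if_pos h2]
      obtain ⟨k, hk⟩ := hcard u.1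
      set w : (i : K) × Fin (sz i) := ⟨k, ⟨0, hsz k⟩⟩ with hw
      have haw : G.Adj u w := (hadj u w).2 (by simp [hw]; exact fun hh => hk hh.symm)
      have hwv : G.Adj w v := (hadj w v).2 (by simp [hw]; rw [← h2]; exact hk)
      have hle : G.dist u v ≤ 2 := by
        have := SimpleGraph.dist_le
          (SimpleGraph.Walk.cons haw (SimpleGraph.Walk.cons hwv SimpleGraph.Walk.nil))
        simpa using this
      have hne0 : G.dist u v ≠ 0 := by
        rw [Ne, SimpleGraph.dist_eq_zero_iff_eq_or_not_reachable]
        push_neg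
        exact ⟨h, ⟨SimpleGraph.Walk.cons haw (SimpleGraph.Walk.cons hwv SimpleGraph.Walk.nil)⟩⟩
      have hne1 : G.dist u v ≠ 1 := by
        rw [Ne, SimpleGraph.dist_eq_one_iff_adj, hadj]
        simpa using h2
      omega
    · rw [if_neg h2]
      rw [SimpleGraph.dist_eq_one_iff_adj, hadj]
      exact h2

section
variable {K : Type*} [Fintype K] [DecidableEq K] (sz : K → ℕ)

abbrev Vt := (i : K) × Fin (sz i)

noncomputable def Em : Matrix (Vt sz) K ℝ := Matrix.of fun v i => if v.1 = i then 1 else 0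

noncomputable def Pm : Matrix K K ℝ := Matrix.of fun i j => (if i = j then 1 else 0) + 1

lemma claim2 : (Em sz)ᵀ * Em sz = Matrix.diagonal (fun i => (sz i : ℝ)) := by
  ext i j
  simp only [Matrix.mul_apply, Matrix.transpose_apply, Em, Matrix.of_apply]
  rw [← Finset.univ_sigma_univ, Finset.sum_sigma]
  by_cases h : i = j
  · subst h
    rw [Matrix.diagonal_apply_eq]
    rw [Finset.sum_eq_single i]
    · simp
    · intro b _ hb
      apply Finset.sum_eq_zero
      intro x _
      simp [hb]
    · simp
  · rw [Matrix.diagonal_apply_ne _ h]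
    apply Finset.sum_eq_zero
    intro a _
    apply Finset.sum_eq_zero
    intro b _
    by_cases ha : a = i
    · subst ha; simp [h]
    · simp [ha]

lemma claim1 (G : SimpleGraph (Vt sz))
    (hdist : ∀ u v : Vt sz, G.dist u v = if u = v then 0 else if u.1 = v.1 then 2 else 1) :
    Em sz * (Pm : Matrix K K ℝ) * (Em sz)ᵀ = distMatrix G + (2 : ℝ) • (1 : Matrix (Vt sz) (Vt sz) ℝ) := by
  ext u v
  have h1 : (Em sz * (Pm : Matrix K K ℝ) * (Em sz)ᵀ) u v = Pm u.1 v.1 := by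
    rw [Matrix.mul_assoc, Matrix.mul_apply]
    simp only [Em, Matrix.of_apply, ite_mul, one_mul, zero_mul]
    rw [Finset.sum_ite_eq]
    simp only [Finset.mem_univ, if_true]
    rw [Matrix.mul_apply]
    simp only [Pm, Matrix.of_apply, Matrix.transpose_apply, Em]
    simp only [mul_ite, mul_one, mul_zero]
    rw [Finset.sum_ite_eq Finset.univ v.1 (fun j => (if u.1 = j then (1:ℝ) else 0) + 1)]
    simp
  rw [h1]
  simp only [Matrix.add_apply, Matrix.smul_apply, Matrix.one_apply, distMatrix, Matrix.of_apply,
    hdist u v, Pm]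
  by_cases h : u = v
  · subst h; simp; norm_num
  · rw [if_neg h]
    by_cases h2 : u.1 = v.1
    · simp [h, h2]; norm_num
    · simp [h, h2]

lemma det_dist (G : SimpleGraph (Vt sz))
    (hdist : ∀ u v : Vt sz, G.dist u v = if u = v then 0 else if u.1 = v.1 then 2 else 1)
    (t : ℝ) (hα : t + 2 ≠ 0) (hd : ∀ i, t + 2 - (sz i : ℝ) ≠ 0) :
    (t • (1 : Matrix (Vt sz) (Vt sz) ℝ) - distMatrix G).det
      = (t+2) ^ (Fintype.card (Vt sz)) * ((t+2)⁻¹) ^ (Fintype.card K) *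
        ((∏ i, (t + 2 - (sz i : ℝ))) * (1 - ∑ i, (sz i : ℝ) / (t + 2 - (sz i : ℝ)))) := by
  have hc : (t+2) * (-(t+2)⁻¹) = -1 := by field_simp
  have e1 : (t+2) • (1 + ((-(t+2)⁻¹) • (Em sz * (Pm : Matrix K K ℝ))) * (Em sz)ᵀ)
      = t • (1 : Matrix (Vt sz) (Vt sz) ℝ) - distMatrix G := by
    rw [Matrix.smul_mul, smul_add, smul_smul, hc, claim1 sz G hdist]
    module
  rw [← e1, Matrix.det_smul, Matrix.det_one_add_mul_comm, Matrix.mul_smul,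
    ← Matrix.mul_assoc, claim2]
  have e2 : (1 : Matrix K K ℝ) + (-(t+2)⁻¹) • (Matrix.diagonal (fun i => (sz i : ℝ)) * Pm)
      = (t+2)⁻¹ • ((t+2) • (1 : Matrix K K ℝ) - Matrix.diagonal (fun i => (sz i : ℝ)) * Pm) := by
    rw [smul_sub, smul_smul, inv_mul_cancel₀ hα, one_smul, sub_eq_add_neg, ← neg_smul]
  rw [e2, Matrix.det_smul]
  have e3 : (t+2) • (1 : Matrix K K ℝ) - Matrix.diagonal (fun i => (sz i : ℝ)) * Pm
      = Matrix.of fun i j => (if i = j then (t + 2 - (sz i : ℝ)) else 0) - (sz i : ℝ) := by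
    ext i j
    simp only [Matrix.sub_apply, Matrix.smul_apply, Matrix.one_apply, Matrix.of_apply,
      Matrix.diagonal_mul, Pm, smul_eq_mul]
    by_cases h : i = j
    · simp [h]; ring
    · simp [h]
  rw [e3, det_diag_sub_rankone _ _ hd, mul_assoc]

end

theorem aux_main (q m : ℕ) (hq : 4 ≤ q) (hm : m = 2 * q - 2) :
    (distMatrix (SimpleGraph.completeMultipartiteGraph
        fun i : Fin (q + 1) => Fin (if i = 0 then m else 2))).charpoly =
      (X + 2) ^ (3 * q - 3) * X ^ (q - 1) *
        (X - C (3 * ((q : ℝ) - 1) + Real.sqrt (5 * (q : ℝ) ^ 2 - 10 * (q : ℝ) + 9))) *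
        (X - C (3 * ((q : ℝ) - 1) - Real.sqrt (5 * (q : ℝ) ^ 2 - 10 * (q : ℝ) + 9))) := by
  set sz : Fin (q + 1) → ℕ := fun i => if i = 0 then m else 2 with hsz
  set Q : ℝ := (q : ℝ) with hQdef
  set M : ℝ := (m : ℝ) with hMdef
  have hQ4 : (4 : ℝ) ≤ Q := by rw [hQdef]; exact_mod_cast hq
  have hM : M = 2 * Q - 2 := by
    rw [hMdef, hQdef, hm]
    push_cast [Nat.cast_sub (by omega : 2 ≤ 2 * q)]
    ring
  set Δ : ℝ := 5 * Q ^ 2 - 10 * Q + 9 with hΔdef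
  have hΔ : 0 ≤ Δ := by nlinarith [sq_nonneg (Q - 1)]
  have hsq : Real.sqrt Δ ^ 2 = Δ := Real.sq_sqrt hΔ
  have hpos : ∀ i, 0 < sz i := by
    intro i; rw [hsz]; dsimp only; split <;> omega
  have hcard : ∀ i : Fin (q + 1), ∃ j : Fin (q + 1), j ≠ i := by
    intro i
    by_cases h : i = 0
    · exact ⟨1, by rw [h]; exact by simp [Fin.ext_iff]; omega⟩
    · exact ⟨0, fun hh => h hh.symm⟩
  have hdist := dist_cmg' sz hpos hcard
  have hcardV : Fintype.card (Vt sz) = 3 * q - 3 + (q + 1) := by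
    rw [Fintype.card_sigma]
    simp only [Fintype.card_fin]
    rw [Fin.sum_univ_succ]
    have h0 : sz 0 = m := by simp [hsz]
    have hsucc : ∀ i : Fin q, sz i.succ = 2 := fun i => by simp [hsz, Fin.succ_ne_zero]
    rw [h0, Finset.sum_congr rfl fun i _ => hsucc i, Finset.sum_const, Finset.card_univ,
      Fintype.card_fin, smul_eq_mul]
    omega
  apply Polynomial.eq_of_infinite_eval_eq
  have hfin : ({-2, 0, M - 2} : Set ℝ).Finite := Set.toFinite _
  apply Set.Infinite.mono (s := ({-2, 0, M - 2} : Set ℝ)ᶜ) ?_ hfin.infinite_compl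
  intro t htmem
  simp only [Set.mem_compl_iff, Set.mem_insert_iff, Set.mem_singleton_iff, not_or] at htmem
  obtain ⟨ht2, ht0, htM⟩ := htmem
  have hα : t + 2 ≠ 0 := fun h => ht2 (by linarith)
  have hβ : t + 2 - M ≠ 0 := fun h => htM (by linarith)
  have hd : ∀ i, t + 2 - (sz i : ℝ) ≠ 0 := by
    intro i
    rw [hsz]; dsimp only; split
    · exact hβ
    · push_cast; convert ht0 using 1; ring
  simp only [Set.mem_setOf_eq]
  rw [evalcp, det_dist sz _ hdist t hα hd, hcardV, Fintype.card_fin]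
  have hprod : (∏ i, (t + 2 - (sz i : ℝ))) = (t + 2 - M) * t ^ q := by
    rw [Fin.prod_univ_succ]
    simp only [hsz, if_pos rfl, Fin.succ_ne_zero, if_neg]
    push_cast
    rw [Finset.prod_congr rfl (fun i _ => by ring : ∀ i ∈ Finset.univ, t + 2 - 2 = t)]
    rw [Finset.prod_const, Finset.card_univ, Fintype.card_fin]
  have hsum : (∑ i, (sz i : ℝ) / (t + 2 - (sz i : ℝ))) = M / (t + 2 - M) + Q * (2 / t) := by
    rw [Fin.sum_univ_succ]
    simp only [hsz, if_pos rfl, Fin.succ_ne_zero, if_neg]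
    push_cast
    rw [Finset.sum_congr rfl (fun i _ => by rw [show t + 2 - 2 = t by ring] :
      ∀ i ∈ Finset.univ, (2:ℝ) / (t + 2 - 2) = 2 / t)]
    rw [Finset.sum_const, Finset.card_univ, Fintype.card_fin, nsmul_eq_mul, hQdef]
  rw [hprod, hsum]
  rw [eval_mul, eval_mul, eval_mul, eval_pow, eval_pow, eval_add, eval_X,
    eval_sub, eval_sub, eval_X, eval_C, eval_C]
  simp only [eval_ofNat]
  have hquad : (t - (3 * (Q - 1) + Real.sqrt Δ)) * (t - (3 * (Q - 1) - Real.sqrt Δ))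
      = (t - 3 * (Q - 1)) ^ 2 - Δ := by
    linear_combination -hsq
  rw [pow_add, inv_pow]
  have hpow : (t + 2) ^ (q + 1) ≠ 0 := pow_ne_zero _ hα
  have htq : t ^ q = t ^ (q - 1) * t := by
    rw [← pow_succ]; congr 1; omega
  rw [mul_assoc ((t + 2) ^ (3 * q - 3)), mul_inv_cancel₀ hpow, mul_one, htq]
  have h2 : t + 2 - (2 * Q - 2) ≠ 0 := by rw [← hM]; exact hβ
  have key : (t + 2 - M) * (t ^ (q - 1) * t) * (1 - (M / (t + 2 - M) + Q * (2 / t)))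
      = t ^ (q - 1) * ((t - (3 * (Q - 1) + Real.sqrt Δ)) * (t - (3 * (Q - 1) - Real.sqrt Δ))) := by
    rw [hquad, hM, hΔdef]
    have h2' : t + 2 - 2 * (Q - 1) ≠ 0 := fun h => h2 (by linarith)
    field_simp
    ring
  rw [key]
  ring

/-- For `n ≥ 4`, the distance spectrum of the non-commuting graph of `QD_{2^n}`,
i.e. of `K_{2^(n-1)-2,2,…,2}` with `2^(n-2)` parts of size `2`, consists of `-2` with
multiplicity `3·2^(n-2)-3`, `0` with multiplicity `2^(n-2)-1`, and the two simple
eigenvalues `3(2^(n-2)-1) ± √(5·(2^(n-2))² - 10·2^(n-2) + 9)`. -/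
theorem distance_spectrum_quasidihedral (n : ℕ) (hn : 4 ≤ n) :
    (distMatrix (SimpleGraph.completeMultipartiteGraph
        fun i : Fin (2 ^ (n - 2) + 1) => Fin (if i = 0 then 2 ^ (n - 1) - 2 else 2))).charpoly =
      (X + 2) ^ (3 * 2 ^ (n - 2) - 3) * X ^ (2 ^ (n - 2) - 1) *
        (X - C (3 * ((2 : ℝ) ^ (n - 2) - 1) +
          Real.sqrt (5 * ((2 : ℝ) ^ (n - 2)) ^ 2 - 10 * (2 : ℝ) ^ (n - 2) + 9))) *
        (X - C (3 * ((2 : ℝ) ^ (n - 2) - 1) -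
          Real.sqrt (5 * ((2 : ℝ) ^ (n - 2)) ^ 2 - 10 * (2 : ℝ) ^ (n - 2) + 9))) := by
  have hq : 4 ≤ 2 ^ (n - 2) := by
    calc (4 : ℕ) = 2 ^ 2 := by norm_num
    _ ≤ 2 ^ (n - 2) := Nat.pow_le_pow_right (by norm_num) (by omega)
  have hm : 2 ^ (n - 1) - 2 = 2 * 2 ^ (n - 2) - 2 := by
    congr 1
    rw [show n - 1 = (n - 2) + 1 by omega, pow_succ]
    ring
  have := aux_main (2 ^ (n - 2)) (2 ^ (n - 1) - 2) hq hm
  rw [this]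
  norm_num [Nat.cast_pow]
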